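/- Let p be a prime, G a finite group, P a Sylow p-subgroup of G, and M a subgroup with P ≤ M ≤ G. Suppose y ∈ P has order p and y does not lie in the derived (commutator) subgroup M' of M, and suppose that for every x ∈ G such that x⁻¹yx ∈ P is extremal in P there exists g ∈ M with x⁻¹yx = g⁻¹yg. Then y does not lie in the derived subgroup G' of G. -/

import Mathlib

/-- `P` is a Sylow `p`-subgroup of the subgroup `K` of `G`: `P` is a `p`-subgroup
contained in `K` which is maximal among the `p`-subgroups of `G` contained in `K`. -/
def IsSylowIn {G : Type*} [Group G] (p : ℕ) (P K : Subgroup G) : Prop :=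
  P ≤ K ∧ IsPGroup p P ∧ ∀ R : Subgroup G, R ≤ K → IsPGroup p R → P ≤ R → R = P

/-- `u` is an extremal element of the `p`-subgroup `P` of `G`: `u ∈ P` and
`C_P(u)` is a Sylow `p`-subgroup of `C_G(u)`. -/
def IsExtremalIn {G : Type*} [Group G] (p : ℕ) (P : Subgroup G) (u : G) : Prop :=
  u ∈ P ∧ IsSylowIn p (Subgroup.centralizer {u} ⊓ P) (Subgroup.centralizer {u})

open Subgroup MulAction Function

section Aux

variable {G : Type*} [Group G]

private lemma phi_conj {H : Type*} [Group H] {A : Type*} [CommGroup A] (ϕ : H →* A)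
    (u m : H) : ϕ (m⁻¹ * u * m) = ϕ u := by
  rw [map_mul, map_mul, map_inv, mul_comm ((ϕ m)⁻¹) (ϕ u), inv_mul_cancel_right]

private lemma conj_mem_map (H : Subgroup G) (a : G) {c : G} (hc : c ∈ H) :
    a⁻¹ * c * a ∈ H.map (MulAut.conj a⁻¹).toMonoidHom :=
  ⟨c, hc, by simp [MulAut.conj_apply]⟩

private lemma card_map_conj (H : Subgroup G) (a : G) :
    Nat.card (H.map (MulAut.conj a).toMonoidHom) = Nat.card H :=
  (Nat.card_congr (H.equivMapOfInjective _ (MulAut.conj a).injective).toEquiv).symm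

private lemma card_le_sylow {p : ℕ} [Fact p.Prime] [Finite G] {C R : Subgroup G}
    (hRC : R ≤ C) (hRp : IsPGroup p R) (Q : Sylow p C) :
    Nat.card R ≤ Nat.card Q := by
  obtain ⟨S, hS⟩ := (hRp.comap_subtype (K := C)).exists_le_sylow
  have h1 : Nat.card R = Nat.card (R.subgroupOf C) :=
    (Nat.card_congr (Subgroup.subgroupOfEquivOfLe hRC).toEquiv).symm
  have h2 : Nat.card (R.subgroupOf C) ≤ Nat.card S := Subgroup.card_le_of_le hS
  have h3 : Nat.card S = Nat.card Q := by
    rw [S.card_eq_multiplicity, Q.card_eq_multiplicity]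
  omega

private lemma isExtremalIn_mk {p : ℕ} [Fact p.Prime] [Finite G] {P T : Subgroup G} {v : G}
    (hPp : IsPGroup p P) (hvP : v ∈ P) (hT : T ≤ Subgroup.centralizer {v} ⊓ P)
    (hmax : ∀ R : Subgroup G, R ≤ Subgroup.centralizer {v} → IsPGroup p R →
      Nat.card R ≤ Nat.card T) :
    IsExtremalIn p P v := by
  refine ⟨hvP, inf_le_left, hPp.to_inf_right, ?_⟩
  intro R hRC hRp hle
  have h1 : Nat.card R ≤ Nat.card T := hmax R hRC hRp
  have h2 : Nat.card T ≤ Nat.card ↥(Subgroup.centralizer {v} ⊓ P) := Subgroup.card_le_of_le hT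
  exact (Subgroup.eq_of_le_of_card_ge hle (le_trans h1 h2)).symm

/-- Abstract counting lemma: product of a `p`-group-invariant function over an invariant
finset, where each value has order dividing `p` and fixed points have value `v`. -/
private lemma prod_eq_pow_of_pgroup {p : ℕ} [hp : Fact p.Prime] {Q : Type*} [Group Q] [Finite Q]
    (hQ : IsPGroup p Q) {α : Type*} [Fintype α] [MulAction Q α] {A : Type*} [CommGroup A]
    (f : α → A) (v : A) (s : Finset α) :
    (∀ (c : Q) (a : α), a ∈ s → c • a ∈ s) →
    (∀ (c : Q) (a : α), a ∈ s → f (c • a) = f a) →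
    (∀ a ∈ s, f a ^ p = 1) →
    (∀ a ∈ s, (∀ c : Q, c • a = a) → f a = v) →
    ∃ k : ℕ, (∏ a ∈ s, f a) = v ^ k ∧ k ≡ s.card [MOD p] := by
  classical
  induction s using Finset.strongInduction with
  | _ s ih =>
  intro hs hconst hord hfix
  rcases s.eq_empty_or_nonempty with rfl | ⟨a, ha⟩
  · exact ⟨0, by simp, by simp [Nat.ModEq]⟩
  letI : Fintype (orbit Q a) := Fintype.ofFinite _
  set o : Finset α := (orbit Q a).toFinset with ho
  have hoa : a ∈ o := Set.mem_toFinset.mpr (mem_orbit_self a)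
  have hos : o ⊆ s := by
    intro b hb
    rw [ho, Set.mem_toFinset] at hb
    obtain ⟨c, rfl⟩ := hb
    exact hs c a ha
  have hcard : o.card = Nat.card (orbit Q a) := by
    rw [ho, Set.toFinset_card, Nat.card_eq_fintype_card]
  obtain ⟨n, hn⟩ := hQ.card_orbit a
  have hfa : ∀ b ∈ o, f b = f a := by
    intro b hb
    rw [ho, Set.mem_toFinset] at hb
    obtain ⟨c, rfl⟩ := hb
    exact hconst c a ha
  have hprodo : ∏ b ∈ o, f b = f a ^ o.card := by
    rw [Finset.prod_congr rfl hfa, Finset.prod_const]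
  have hssub : s \ o ⊂ s := Finset.sdiff_ssubset hos ⟨a, hoa⟩
  have hinv' : ∀ (c : Q) (b : α), b ∈ s \ o → c • b ∈ s \ o := by
    intro c b hb
    rw [Finset.mem_sdiff] at hb ⊢
    refine ⟨hs c b hb.1, fun hmem => hb.2 ?_⟩
    rw [ho, Set.mem_toFinset] at hmem ⊢
    obtain ⟨d, hd⟩ := hmem
    refine ⟨c⁻¹ * d, ?_⟩
    have hd' : d • a = c • b := hd
    show (c⁻¹ * d) • a = b
    rw [mul_smul, hd', inv_smul_smul]
  obtain ⟨k, hk1, hk2⟩ := ih (s \ o) hssub hinv'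
      (fun c b hb => hconst c b (Finset.mem_sdiff.mp hb).1)
      (fun b hb => hord b (Finset.mem_sdiff.mp hb).1)
      (fun b hb hc => hfix b (Finset.mem_sdiff.mp hb).1 hc)
  have hsplit : (∏ b ∈ s \ o, f b) * ∏ b ∈ o, f b = ∏ b ∈ s, f b := Finset.prod_sdiff hos
  have hcards : (s \ o).card + o.card = s.card := Finset.card_sdiff_add_card_eq_card hos
  by_cases hn0 : n = 0
  · have h1 : o.card = 1 := by rw [hcard, hn, hn0, pow_zero]
    have hofix : ∀ c : Q, c • a = a := by
      intro c
      have hmem : c • a ∈ o := by rw [ho, Set.mem_toFinset]; exact ⟨c, rfl⟩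
      obtain ⟨b, hb⟩ := Finset.card_eq_one.mp h1
      rw [hb, Finset.mem_singleton] at hmem hoa
      rw [hmem, ← hoa]
    refine ⟨k + 1, ?_, ?_⟩
    · rw [← hsplit, hprodo, h1, pow_one, hfix a (hos hoa) hofix, hk1, pow_succ]
    · have : (s \ o).card + 1 = s.card := by omega
      calc k + 1 ≡ (s \ o).card + 1 [MOD p] := hk2.add_right 1
        _ = s.card := this
  · have hdvd : p ∣ o.card := by rw [hcard, hn]; exact dvd_pow_self p hn0
    have h1 : f a ^ o.card = 1 := by
      obtain ⟨t, ht⟩ := hdvd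
      rw [ht, pow_mul, hord a (hos hoa), one_pow]
    have h0 : o.card ≡ 0 [MOD p] := (Nat.modEq_zero_iff_dvd).mpr hdvd
    refine ⟨k, ?_, ?_⟩
    · rw [← hsplit, hprodo, h1, mul_one, hk1]
    · calc k = k + 0 := by omega
        _ ≡ (s \ o).card + o.card [MOD p] := Nat.ModEq.add hk2 h0.symm
        _ = s.card := hcards

/-- The key fusion step: if the coset representative `x` conjugates the whole Sylow
subgroup `Q₀` of `C_G(y)` into `M`, then `x⁻¹ * y * x` is `M`-conjugate to `y`. -/
private lemma key_fixed [Fintype G] {p : ℕ} [Fact p.Prime]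
    (P : Sylow p G) (M : Subgroup G) (hPM : (P : Subgroup G) ≤ M)
    {y : G} (hfus : ∀ x : G, IsExtremalIn p (P : Subgroup G) (x⁻¹ * y * x) →
      ∃ g ∈ M, x⁻¹ * y * x = g⁻¹ * y * g)
    {Q₀ : Subgroup G} (hQ₀Cy : Q₀ ≤ Subgroup.centralizer {y}) (hyQ₀ : y ∈ Q₀)
    (hQ₀p : IsPGroup p Q₀)
    (hQ₀max : ∀ R : Subgroup G, R ≤ Subgroup.centralizer {y} → IsPGroup p R →
      Nat.card R ≤ Nat.card Q₀)
    {x : G} (hQx : ∀ c ∈ Q₀, x⁻¹ * c * x ∈ M) :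
    ∃ g ∈ M, x⁻¹ * y * x = g⁻¹ * y * g := by
  classical
  set R : Subgroup G := Q₀.map (MulAut.conj x⁻¹).toMonoidHom with hR
  have hRM : R ≤ M := by
    rintro r ⟨c, hc, rfl⟩
    simpa [MulAut.conj_apply] using hQx c hc
  have hRp : IsPGroup p R := hQ₀p.map _
  have hzR : x⁻¹ * y * x ∈ R := conj_mem_map Q₀ x hyQ₀
  obtain ⟨S₂, hS₂⟩ := (hRp.comap_subtype (K := M)).exists_le_sylow
  obtain ⟨m, hm⟩ := MulAction.exists_smul_eq (↥M) S₂ (P.subtype hPM)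
  have hmm : ∀ r : G, r ∈ R → (↑m : G) * r * (↑m : G)⁻¹ ∈ (P : Subgroup G) := by
    intro r hr
    have h1 : (⟨r, hRM hr⟩ : ↥M) ∈ (S₂ : Subgroup ↥M) := hS₂ (Subgroup.mem_subgroupOf.mpr hr)
    have h2 : m * ⟨r, hRM hr⟩ * m⁻¹ ∈ ((m • S₂ : Sylow p ↥M) : Set ↥M) := by
      rw [Sylow.coe_smul]
      exact Set.smul_mem_smul_set h1
    rw [hm] at h2
    have h3 : m * ⟨r, hRM hr⟩ * m⁻¹ ∈ (P : Subgroup G).subgroupOf M := by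
      rw [← Sylow.coe_subtype P hPM]
      exact h2
    simpa using Subgroup.mem_subgroupOf.mp h3
  set a : G := x * (↑m : G)⁻¹ with ha
  have hva : a⁻¹ * y * a = ↑m * (x⁻¹ * y * x) * (↑m : G)⁻¹ := by
    rw [ha]; group
  have hvP : a⁻¹ * y * a ∈ (P : Subgroup G) := by
    rw [hva]; exact hmm _ hzR
  set T : Subgroup G := Q₀.map (MulAut.conj a⁻¹).toMonoidHom with hT
  have hcy : ∀ c ∈ Q₀, y * c = c * y := fun c hc =>
    (Subgroup.mem_centralizer_iff.mp (hQ₀Cy hc)) y rfl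
  have hconj_a : ∀ c : G, (MulAut.conj a⁻¹).toMonoidHom c = a⁻¹ * c * a := by
    intro c; simp [MulAut.conj_apply]
  have hTle : T ≤ Subgroup.centralizer {a⁻¹ * y * a} ⊓ (P : Subgroup G) := by
    rintro t ⟨c, hc, rfl⟩
    rw [hconj_a c]
    refine Subgroup.mem_inf.mpr ⟨?_, ?_⟩
    · rw [Subgroup.mem_centralizer_iff]
      intro g hg
      rw [Set.eq_of_mem_singleton hg]
      have h1 : a⁻¹ * (y * c) * a = a⁻¹ * (c * y) * a := by rw [hcy c hc]
      calc a⁻¹ * y * a * (a⁻¹ * c * a) = a⁻¹ * (y * c) * a := by group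
        _ = a⁻¹ * (c * y) * a := h1
        _ = a⁻¹ * c * a * (a⁻¹ * y * a) := by group
    · have h1 : a⁻¹ * c * a = ↑m * (x⁻¹ * c * x) * (↑m : G)⁻¹ := by rw [ha]; group
      rw [h1]
      exact hmm _ (conj_mem_map Q₀ x hc)
  have hmax : ∀ R₂ : Subgroup G, R₂ ≤ Subgroup.centralizer {a⁻¹ * y * a} → IsPGroup p R₂ →
      Nat.card R₂ ≤ Nat.card T := by
    intro R₂ hR₂C hR₂p
    have h1 : Nat.card (R₂.map (MulAut.conj a).toMonoidHom) = Nat.card R₂ := card_map_conj R₂ a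
    have h2 : R₂.map (MulAut.conj a).toMonoidHom ≤ Subgroup.centralizer {y} := by
      rintro r ⟨d, hd, rfl⟩
      have hdv : (a⁻¹ * y * a) * d = d * (a⁻¹ * y * a) :=
        Subgroup.mem_centralizer_iff.mp (hR₂C hd) _ rfl
      rw [Subgroup.mem_centralizer_iff]
      intro g hg
      rw [Set.eq_of_mem_singleton hg]
      have : a * ((a⁻¹ * y * a) * d) * a⁻¹ = a * (d * (a⁻¹ * y * a)) * a⁻¹ := by rw [hdv]
      calc y * (MulAut.conj a).toMonoidHom d = a * ((a⁻¹ * y * a) * d) * a⁻¹ := by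
            simp [MulAut.conj_apply]; group
        _ = a * (d * (a⁻¹ * y * a)) * a⁻¹ := this
        _ = (MulAut.conj a).toMonoidHom d * y := by simp [MulAut.conj_apply]; group
    have h3 := hQ₀max _ h2 (hR₂p.map _)
    have h4 : Nat.card T = Nat.card Q₀ := card_map_conj Q₀ a⁻¹
    omega
  have hext : IsExtremalIn p (P : Subgroup G) (a⁻¹ * y * a) :=
    isExtremalIn_mk P.isPGroup' hvP hTle hmax
  obtain ⟨g, hg, hgv⟩ := hfus a hext
  have hkey : ↑m * (x⁻¹ * y * x) * (↑m : G)⁻¹ = g⁻¹ * y * g := by rw [← hva, hgv]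
  refine ⟨g * ↑m, mul_mem hg m.2, ?_⟩
  calc x⁻¹ * y * x = (↑m : G)⁻¹ * (↑m * (x⁻¹ * y * x) * (↑m : G)⁻¹) * ↑m := by group
    _ = (↑m : G)⁻¹ * (g⁻¹ * y * g) * ↑m := by rw [hkey]
    _ = (g * ↑m)⁻¹ * y * (g * ↑m) := by group

end Aux

theorem stmt1 {G : Type*} [Group G] [Fintype G] {p : ℕ} [Fact p.Prime]
    (P : Sylow p G) (M : Subgroup G) (hPM : (P : Subgroup G) ≤ M)
    (y : G) (hyP : y ∈ (P : Subgroup G)) (hy : orderOf y = p)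
    (hyM : y ∉ ⁅M, M⁆)
    (hfus : ∀ x : G, IsExtremalIn p (P : Subgroup G) (x⁻¹ * y * x) →
      ∃ g ∈ M, x⁻¹ * y * x = g⁻¹ * y * g) :
    y ∉ commutator G := by
  intro hyG
  classical
  have hp : p.Prime := Fact.out
  have hyM' : y ∈ M := hPM hyP
  have hyp : y ^ p = 1 := by rw [← hy, pow_orderOf_eq_one]
  -- the centralizer of y and a Sylow p-subgroup of it containing y
  set Cy : Subgroup G := Subgroup.centralizer {y} with hCy
  have hyCy : y ∈ Cy := Subgroup.mem_centralizer_iff.mpr (by rintro g rfl; rfl)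
  have hzp : IsPGroup p (Subgroup.zpowers (⟨y, hyCy⟩ : Cy)) := by
    apply IsPGroup.of_card
    rw [Nat.card_zpowers]
    have : orderOf (⟨y, hyCy⟩ : Cy) = orderOf y :=
      (orderOf_injective Cy.subtype Subtype.coe_injective ⟨y, hyCy⟩).symm
    rw [this, hy, pow_one]
  obtain ⟨Q, hQ⟩ := hzp.exists_le_sylow
  set Q₀ : Subgroup G := (Q : Subgroup Cy).map Cy.subtype with hQ₀
  have hyQ₀ : y ∈ Q₀ := ⟨⟨y, hyCy⟩, hQ (Subgroup.mem_zpowers _), rfl⟩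
  have hQ₀Cy : Q₀ ≤ Cy := by
    rintro c ⟨d, _, rfl⟩; exact d.2
  have hQ₀p : IsPGroup p Q₀ := Q.isPGroup'.map _
  have hcardQ₀ : Nat.card Q₀ = Nat.card Q :=
    (Nat.card_congr ((Q : Subgroup Cy).equivMapOfInjective Cy.subtype
      Subtype.coe_injective).toEquiv).symm
  have hQ₀max : ∀ R : Subgroup G, R ≤ Cy → IsPGroup p R → Nat.card R ≤ Nat.card Q₀ := by
    intro R hRC hRp
    rw [hcardQ₀]
    exact card_le_sylow hRC hRp Q
  -- the transfer homomorphism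
  set ϕ : ↥M →* Abelianization ↥M := Abelianization.of with hϕ
  have hker : (MonoidHom.transfer ϕ) y = 1 :=
    Abelianization.commutator_subset_ker (MonoidHom.transfer ϕ) hyG
  letI : Fintype (G ⧸ M) := Fintype.ofFinite _
  letI : Fintype (Quotient (orbitRel (Subgroup.zpowers y) (G ⧸ M))) := Fintype.ofFinite _
  rw [MonoidHom.transfer_eq_prod_quotient_orbitRel_zpowers_quot] at hker
  -- the factor function
  set fac : G ⧸ M → Abelianization ↥M := fun b =>
    Abelianization.of ⟨b.out⁻¹ * y ^ Function.minimalPeriod (y • ·) b * b.out,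
      QuotientGroup.out_conj_pow_minimalPeriod_mem M y b⟩ with hfacdef
  have hker' : ∏ q : Quotient (orbitRel (Subgroup.zpowers y) (G ⧸ M)), fac q.out = 1 := hker
  have hfac_eq : ∀ (b : G ⧸ M) (u : ↥M),
      (u : G) = b.out⁻¹ * y ^ Function.minimalPeriod (y • ·) b * b.out →
      fac b = Abelianization.of u := by
    intro b u hu
    rw [hfacdef]
    exact congrArg _ (Subtype.ext hu.symm)
  -- fixed cosets and minimal periods
  have hmp_dvd : ∀ b : G ⧸ M, Function.minimalPeriod (y • ·) b ∣ p := by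
    intro b
    apply Function.IsPeriodicPt.minimalPeriod_dvd
    show (y • ·)^[p] b = b
    rw [smul_iterate_apply, hyp, one_smul]
  have hfix_iff : ∀ b : G ⧸ M, y • b = b ↔ Function.minimalPeriod (y • ·) b = 1 := by
    intro b
    rw [Function.minimalPeriod_eq_one_iff_isFixedPt]
    rfl
  have hmp_p : ∀ b : G ⧸ M, ¬ y • b = b → Function.minimalPeriod (y • ·) b = p := by
    intro b hb
    rcases (Nat.Prime.eq_one_or_self_of_dvd hp _ (hmp_dvd b)) with h | h
    · exact absurd ((hfix_iff b).mpr h) hb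
    · exact h
  have hzmem : ∀ b : G ⧸ M, y • b = b → b.out⁻¹ * y * b.out ∈ M := by
    intro b hb
    have h := QuotientGroup.out_conj_pow_minimalPeriod_mem M y b
    rwa [(hfix_iff b).mp hb, pow_one] at h
  have hfac_fixed : ∀ (b : G ⧸ M) (hb : y • b = b),
      fac b = Abelianization.of ⟨b.out⁻¹ * y * b.out, hzmem b hb⟩ := by
    intro b hb
    exact hfac_eq b _ (by rw [(hfix_iff b).mp hb, pow_one])
  have hfac_one : ∀ b : G ⧸ M, ¬ y • b = b → fac b = 1 := by
    intro b hb
    have hm := hmp_p b hb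
    have h2 : (⟨b.out⁻¹ * y ^ Function.minimalPeriod (y • ·) b * b.out,
        QuotientGroup.out_conj_pow_minimalPeriod_mem M y b⟩ : ↥M) = 1 := by
      apply Subtype.ext
      show b.out⁻¹ * y ^ Function.minimalPeriod (y • ·) b * b.out = 1
      rw [hm, hyp]
      simp
    show Abelianization.of ((⟨b.out⁻¹ * y ^ Function.minimalPeriod (y • ·) b * b.out,
        QuotientGroup.out_conj_pow_minimalPeriod_mem M y b⟩ : ↥M)) = 1
    rw [h2, map_one]
  -- stabilizer facts
  have hstab : ∀ b : G ⧸ M, y • b = b → ∀ c : Subgroup.zpowers y, c • b = b := by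
    intro b hb c
    have h1 : Subgroup.zpowers y ≤ MulAction.stabilizer G b :=
      Subgroup.zpowers_le.mpr (MulAction.mem_stabilizer_iff.mpr hb)
    exact MulAction.mem_stabilizer_iff.mp (h1 c.2)
  have hout_fixed : ∀ b : G ⧸ M, y • b = b →
      (Quotient.mk (orbitRel (Subgroup.zpowers y) (G ⧸ M)) b).out = b := by
    intro b hb
    have h1 := Quotient.mk_out (s := orbitRel (Subgroup.zpowers y) (G ⧸ M)) b
    rw [orbitRel_apply] at h1
    obtain ⟨c, hc⟩ := h1
    have hc' : c • b = (Quotient.mk (orbitRel (Subgroup.zpowers y) (G ⧸ M)) b).out := hc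
    rw [← hc', hstab b hb c]
  -- the set of fixed cosets
  set s : Finset (G ⧸ M) := Finset.univ.filter (fun b => y • b = b) with hs
  -- rewrite the product over orbit classes as product over fixed cosets
  have hprod1 : ∏ q : Quotient (orbitRel (Subgroup.zpowers y) (G ⧸ M)), fac q.out
      = ∏ b ∈ s, fac b := by
    rw [hs]
    have hfilter := Finset.prod_filter_of_ne
      (s := (Finset.univ : Finset (Quotient (orbitRel (Subgroup.zpowers y) (G ⧸ M)))))
      (p := fun q : Quotient (orbitRel (Subgroup.zpowers y) (G ⧸ M)) => y • q.out = q.out)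
      (f := fun q : Quotient (orbitRel (Subgroup.zpowers y) (G ⧸ M)) => fac q.out)
      (fun q _ hq => by
        by_contra h
        exact hq (hfac_one q.out h))
    rw [← hfilter]
    apply Finset.prod_nbij' (fun q => q.out)
      (fun b => Quotient.mk (orbitRel (Subgroup.zpowers y) (G ⧸ M)) b)
    · intro q hq
      rw [Finset.mem_filter] at hq ⊢
      exact ⟨Finset.mem_univ _, hq.2⟩
    · intro b hb
      rw [Finset.mem_filter] at hb ⊢
      refine ⟨Finset.mem_univ _, ?_⟩
      show y • (Quotient.mk (orbitRel (Subgroup.zpowers y) (G ⧸ M)) b).out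
          = (Quotient.mk (orbitRel (Subgroup.zpowers y) (G ⧸ M)) b).out
      rw [hout_fixed b hb.2]
      exact hb.2
    · intro q _
      exact Quotient.out_eq q
    · intro b hb
      rw [Finset.mem_filter] at hb
      exact hout_fixed b hb.2
    · intro q _
      rfl
  -- the target value
  set vy : Abelianization ↥M := Abelianization.of ⟨y, hyM'⟩ with hvy
  -- apply the counting lemma with the p-group Q₀ acting on G ⧸ M
  have hQ₀fin : Finite ↥Q₀ := inferInstance
  have hcomm : ∀ c : ↥Q₀, y * (c : G) = (c : G) * y := fun c =>
    Subgroup.mem_centralizer_iff.mp (hQ₀Cy c.2) y rfl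
  have hsmul_comm : ∀ (c : ↥Q₀) (b : G ⧸ M), y • ((c : G) • b) = (c : G) • (y • b) := by
    intro c b
    rw [← mul_smul, ← mul_smul, hcomm c]
  have hact_s : ∀ (c : ↥Q₀) (b : G ⧸ M), b ∈ s → c • b ∈ s := by
    intro c b hb
    rw [hs, Finset.mem_filter] at hb ⊢
    refine ⟨Finset.mem_univ _, ?_⟩
    show y • ((c : G) • b) = (c : G) • b
    rw [hsmul_comm c b, hb.2]
  have hconst : ∀ (c : ↥Q₀) (b : G ⧸ M), b ∈ s → fac (c • b) = fac b := by
    intro c b hb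
    rw [hs, Finset.mem_filter] at hb
    have hb2 := hb.2
    have hcb : y • ((c : G) • b) = (c : G) • b := by rw [hsmul_comm c b, hb2]
    set x : G := b.out with hx
    set x' : G := ((c : G) • b).out with hx'
    have hbx : (x : G ⧸ M) = b := QuotientGroup.out_eq' b
    have hμ : ((c : G) * x)⁻¹ * x' ∈ M := by
      rw [← QuotientGroup.eq]
      show ((c : G) * x : G ⧸ M) = (x' : G ⧸ M)
      rw [QuotientGroup.out_eq']
      have : ((c : G) * x : G ⧸ M) = (c : G) • b := by
        rw [← hbx]
        rfl
      rw [this]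
    set μ : G := ((c : G) * x)⁻¹ * x' with hμdef
    have hx'eq : x' = (c : G) * x * μ := by rw [hμdef]; group
    have hzmemb : x⁻¹ * y * x ∈ M := hzmem b hb2
    have hcval : (c : G)⁻¹ * y * (c : G) = y := by
      calc (c : G)⁻¹ * y * (c : G) = (c : G)⁻¹ * (y * (c : G)) := by group
        _ = (c : G)⁻¹ * ((c : G) * y) := by rw [hcomm c]
        _ = y := by group
    have hval : x'⁻¹ * y * x' = μ⁻¹ * (x⁻¹ * y * x) * μ := by
      rw [hx'eq]
      calc (↑c * x * μ)⁻¹ * y * (↑c * x * μ)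
          = μ⁻¹ * x⁻¹ * ((c : G)⁻¹ * y * ↑c) * x * μ := by group
        _ = μ⁻¹ * x⁻¹ * y * x * μ := by rw [hcval]
        _ = μ⁻¹ * (x⁻¹ * y * x) * μ := by group
    have h1 : fac ((c : G) • b) =
        Abelianization.of ⟨x'⁻¹ * y * x', hzmem _ hcb⟩ := hfac_fixed _ hcb
    have h2 : fac b = Abelianization.of ⟨x⁻¹ * y * x, hzmemb⟩ := hfac_fixed _ hb2
    have h3 : (⟨x'⁻¹ * y * x', hzmem _ hcb⟩ : ↥M)
        = (⟨μ, hμ⟩ : ↥M)⁻¹ * ⟨x⁻¹ * y * x, hzmemb⟩ * ⟨μ, hμ⟩ := by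
      apply Subtype.ext
      simp only [Subgroup.coe_mul, InvMemClass.coe_inv]
      exact hval
    show fac ((c : G) • b) = fac b
    rw [h1, h2, h3, phi_conj]
  have hconjpow : ∀ (x w : G) (k : ℕ), (x⁻¹ * w * x) ^ k = x⁻¹ * w ^ k * x := by
    intro x w k
    induction k with
    | zero => simp
    | succ n ihn =>
      rw [pow_succ, pow_succ, ihn]
      group
  have hord : ∀ b ∈ s, fac b ^ p = 1 := by
    intro b _
    have hupow : (b.out⁻¹ * y ^ Function.minimalPeriod (y • ·) b * b.out) ^ p = 1 := by
      rw [hconjpow, ← pow_mul, mul_comm (Function.minimalPeriod (y • ·) b) p, pow_mul, hyp,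
        one_pow]
      simp
    have h2 : (⟨b.out⁻¹ * y ^ Function.minimalPeriod (y • ·) b * b.out,
        QuotientGroup.out_conj_pow_minimalPeriod_mem M y b⟩ : ↥M) ^ p = 1 := by
      apply Subtype.ext
      push_cast
      exact hupow
    show Abelianization.of ((⟨b.out⁻¹ * y ^ Function.minimalPeriod (y • ·) b * b.out,
        QuotientGroup.out_conj_pow_minimalPeriod_mem M y b⟩ : ↥M)) ^ p = 1
    rw [← map_pow, h2, map_one]
  have hfixv : ∀ b ∈ s, (∀ c : ↥Q₀, c • b = b) → fac b = vy := by
    intro b hb hc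
    rw [hs, Finset.mem_filter] at hb
    set x : G := b.out with hx
    have hQx : ∀ c ∈ Q₀, x⁻¹ * c * x ∈ M := by
      intro c hcQ
      have h1 : (⟨c, hcQ⟩ : ↥Q₀)⁻¹ • b = b := hc _
      have h2 : (c⁻¹ : G) • b = b := h1
      have h3 : (c⁻¹ * x : G ⧸ M) = (x : G ⧸ M) := by
        have e1 : ((c⁻¹ * x : G) : G ⧸ M) = (c⁻¹ : G) • (x : G ⧸ M) := rfl
        have e2 : (x : G ⧸ M) = b := QuotientGroup.out_eq' b
        rw [e1, e2, h2]
      have h4 := QuotientGroup.eq.mp h3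
      simpa [mul_assoc] using h4
    obtain ⟨g, hg, hgeq⟩ := key_fixed P M hPM hfus hQ₀Cy hyQ₀ hQ₀p hQ₀max hQx
    have h1 : fac b = Abelianization.of ⟨x⁻¹ * y * x, hzmem b hb.2⟩ := hfac_fixed b hb.2
    have h2 : (⟨x⁻¹ * y * x, hzmem b hb.2⟩ : ↥M)
        = (⟨g, hg⟩ : ↥M)⁻¹ * ⟨y, hyM'⟩ * ⟨g, hg⟩ := by
      apply Subtype.ext
      simpa using hgeq
    rw [h1, h2, phi_conj, hvy]
  obtain ⟨k, hk1, hk2⟩ := prod_eq_pow_of_pgroup hQ₀p (A := Abelianization ↥M) fac vy s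
    hact_s hconst hord hfixv
  -- vy has order p
  have hvy_ne : vy ≠ 1 := by
    intro h
    apply hyM
    have h1 : (⟨y, hyM'⟩ : ↥M) ∈ commutator ↥M := by
      rw [hvy] at h
      exact (QuotientGroup.eq_one_iff _).mp h
    have h2 : y ∈ (commutator ↥M).map M.subtype := ⟨⟨y, hyM'⟩, h1, rfl⟩
    have h3 : (commutator ↥M).map M.subtype = ⁅M, M⁆ := by
      rw [_root_.commutator_def, Subgroup.map_commutator, ← MonoidHom.range_eq_map,
        Subgroup.range_subtype]
    rwa [h3] at h2
  have hvy_pow : vy ^ p = 1 := by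
    rw [hvy, ← map_pow]
    have : (⟨y, hyM'⟩ : ↥M) ^ p = 1 := by
      apply Subtype.ext
      push_cast
      exact hyp
    rw [this, map_one]
  have hvy_ord : orderOf vy = p := orderOf_eq_prime hvy_pow hvy_ne
  -- index not divisible by p
  have hPind : ¬ p ∣ (P : Subgroup G).index := by
    apply Sylow.not_dvd_index'
    have : (((P : Subgroup G)).subgroupOf (normalizer ((P : Subgroup G) : Set G))).index ≠ 0 :=
      Subgroup.index_ne_zero_of_finite
    exact this
  have hMind : ¬ p ∣ M.index := fun h =>
    hPind (h.trans (Subgroup.index_dvd_of_le hPM))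
  -- card of s
  have hzyp : IsPGroup p (Subgroup.zpowers y) := by
    apply IsPGroup.of_card
    rw [Nat.card_zpowers, hy, pow_one]
  have hscard : s.card ≡ M.index [MOD p] := by
    have h1 : Nat.card (G ⧸ M) ≡ Nat.card (MulAction.fixedPoints (Subgroup.zpowers y) (G ⧸ M))
        [MOD p] := hzyp.card_modEq_card_fixedPoints (G ⧸ M)
    have h2 : Nat.card (MulAction.fixedPoints (Subgroup.zpowers y) (G ⧸ M)) = s.card := by
      rw [Nat.card_eq_fintype_card]
      rw [hs]
      rw [← Fintype.card_subtype]
      apply Fintype.card_congr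
      apply Equiv.subtypeEquivRight
      intro b
      rw [MulAction.mem_fixedPoints]
      constructor
      · intro h
        exact h ⟨y, Subgroup.mem_zpowers y⟩
      · intro h c
        exact hstab b h c
    have h3 : Nat.card (G ⧸ M) = M.index := (Subgroup.index_eq_card M).symm
    rw [h2, h3] at h1
    exact h1.symm
  -- conclusion
  rw [hprod1, hk1] at hker'
  have hpk : p ∣ k := hvy_ord ▸ orderOf_dvd_of_pow_eq_one hker'
  have : p ∣ M.index := by
    have h1 : k ≡ M.index [MOD p] := hk2.trans hscard
    have h2 : (0 : ℕ) ≡ M.index [MOD p] := ((Nat.modEq_zero_iff_dvd).mpr hpk).symm.trans h1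
    exact (Nat.modEq_zero_iff_dvd).mp h2.symm
  exact hMind this
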